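/- If a sequence of real numbers (r_n) converges classically to a real number r that is not a dyadic rational, then the s-limit of the sign expansions of the r_n is exactly the sign expansion of r. -/
import Mathlib


open scoped Classical

noncomputable def slim {L M A : Type*} [LinearOrder L] [LinearOrder M]
    (a : L → M → Option A) : M → Option A := fun m =>
  if h : ∃ l0 : L, ∀ m' ≤ m, ∀ l, l0 ≤ l → ∀ l', l0 ≤ l' →
      a l m' = a l' m' ∧ (a l m').isSome
  then a h.choose m else none

noncomputable def slimIio {A : Type*} (α : Ordinal) (s : Ordinal → Ordinal → Option A) :
    Ordinal → Option A :=
  slim (L := Set.Iio α) (fun β => s β.1)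

abbrev SignStr := Ordinal → Option Bool

def signVal : Option Bool → ℕ
  | none => 1
  | some false => 0
  | some true => 2

def strLT (s t : SignStr) : Prop :=
  ∃ γ, (∀ β < γ, s β = t β) ∧ signVal (s γ) < signVal (t γ)

def strLE (s t : SignStr) : Prop := s = t ∨ strLT s t

noncomputable def ordStr (α : Ordinal) : SignStr := fun γ => if γ < α then some true else none

noncomputable def strLength {A : Type*} (a : Ordinal → Option A) : Ordinal :=
  sInf {γ | a γ = none}

noncomputable def strAppend {A : Type*} (a b : Ordinal → Option A) : Ordinal → Option A :=
  fun γ => if γ < strLength a then a γ else b (γ - strLength a)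

noncomputable def oneOverOmega : SignStr := fun γ =>
  if γ = 0 then some true else if γ < Ordinal.omega0 then some false else none

noncomputable def negOneOverOmega : SignStr := fun γ =>
  if γ = 0 then some false else if γ < Ordinal.omega0 then some true else none

def IsDyadic (x : ℝ) : Prop := ∃ (k : ℤ) (m : ℕ), x = k / 2 ^ m

noncomputable def cand : Option ℝ × Option ℝ → ℝ
  | (none, none) => 0
  | (some l, none) => l + 1
  | (none, some u) => u - 1
  | (some l, some u) => (l + u) / 2

noncomputable def signState (r : ℝ) : ℕ → Option ℝ × Option ℝ
  | 0 => (none, none)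
  | n + 1 =>
      let st := signState r n
      let c := cand st
      if c < r then (some c, st.2)
      else if r < c then (st.1, some c)
      else st

noncomputable def signAt (r : ℝ) (n : ℕ) : Option Bool :=
  let c := cand (signState r n)
  if c < r then some true else if r < c then some false else none

noncomputable def signExp (r : ℝ) : SignStr := fun γ =>
  if h : ∃ n : ℕ, γ = (n : Ordinal) then signAt r h.choose else none


lemma dy0 : IsDyadic 0 := ⟨0, 0, by norm_num⟩
lemma dyadd (x : ℝ) (h : IsDyadic x) : IsDyadic (x + 1) := by
  obtain ⟨k, m, rfl⟩ := h
  exact ⟨k + 2 ^ m, m, by push_cast; field_simp⟩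
lemma dysub (x : ℝ) (h : IsDyadic x) : IsDyadic (x - 1) := by
  obtain ⟨k, m, rfl⟩ := h
  exact ⟨k - 2 ^ m, m, by push_cast; field_simp⟩
lemma dyavg (a b : ℝ) (ha : IsDyadic a) (hb : IsDyadic b) : IsDyadic ((a + b) / 2) := by
  obtain ⟨k, m, rfl⟩ := ha
  obtain ⟨j, p, rfl⟩ := hb
  refine ⟨k * 2 ^ p + j * 2 ^ m, m + p + 1, ?_⟩
  push_cast
  rw [pow_succ, pow_add]
  field_simp

lemma cand_dyadic (st : Option ℝ × Option ℝ) (h1 : ∀ l ∈ st.1, IsDyadic l)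
    (h2 : ∀ u ∈ st.2, IsDyadic u) : IsDyadic (cand st) := by
  obtain ⟨l, u⟩ := st
  match l, u with
  | none, none => exact dy0
  | some l, none => exact dyadd l (h1 l rfl)
  | none, some u => exact dysub u (h2 u rfl)
  | some l, some u => exact dyavg l u (h1 l rfl) (h2 u rfl)

lemma signState_dyadic (x : ℝ) : ∀ n, (∀ l ∈ (signState x n).1, IsDyadic l) ∧
    (∀ u ∈ (signState x n).2, IsDyadic u) := by
  intro n
  induction n with
  | zero => simp [signState]
  | succ n ih =>
      have hc := cand_dyadic _ ih.1 ih.2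
      simp only [signState]
      split_ifs with h1 h2
      · exact ⟨fun l hl => by simp at hl; exact hl ▸ hc, ih.2⟩
      · exact ⟨ih.1, fun u hu => by simp at hu; exact hu ▸ hc⟩
      · exact ih

lemma cand_ne (x : ℝ) (hx : ¬ IsDyadic x) (n : ℕ) : cand (signState x n) ≠ x :=
  fun h => hx (h ▸ cand_dyadic _ (signState_dyadic x n).1 (signState_dyadic x n).2)

lemma signAt_isSome (x : ℝ) (hx : ¬ IsDyadic x) (n : ℕ) : (signAt x n).isSome := by
  rcases (cand_ne x hx n).lt_or_gt with h | h <;> simp [signAt, h, asymm h]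

lemma signState_close (x y : ℝ) : ∀ n, (∀ k < n, |y - x| < |cand (signState x k) - x|) →
    signState y n = signState x n := by
  intro n
  induction n with
  | zero => intro _; rfl
  | succ n ih =>
      intro h
      have hst : signState y n = signState x n := ih fun k hk => h k (hk.trans n.lt_succ_self)
      have hc := h n n.lt_succ_self
      set c := cand (signState x n) with hcdef
      simp only [signState, hst, ← hcdef]
      rcases lt_trichotomy c x with hcx | hcx | hcx
      · have hcy : c < y := by
          rw [abs_sub_comm c x, abs_of_pos (sub_pos.2 hcx)] at hc
          have := (abs_lt.1 hc).1; linarith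
        rw [if_pos hcy, if_pos hcx]
      · rw [hcx, sub_self, abs_zero] at hc
        exact absurd hc (not_lt.2 (abs_nonneg _))
      · have hcy : y < c := by
          rw [abs_of_pos (sub_pos.2 hcx)] at hc
          have := (abs_lt.1 hc).2; linarith
        rw [if_neg (asymm hcy), if_neg (asymm hcx), if_pos hcy, if_pos hcx]

lemma signAt_close (x y : ℝ) (n : ℕ) (h : ∀ k ≤ n, |y - x| < |cand (signState x k) - x|) :
    signAt y n = signAt x n := by
  have hst : signState y n = signState x n :=
    signState_close x y n fun k hk => h k hk.le
  have hc := h n le_rfl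
  set c := cand (signState x n) with hcdef
  simp only [signAt, hst, ← hcdef]
  rcases lt_trichotomy c x with hcx | hcx | hcx
  · have hcy : c < y := by
      rw [abs_sub_comm c x, abs_of_pos (sub_pos.2 hcx)] at hc
      have := (abs_lt.1 hc).1; linarith
    rw [if_pos hcy, if_pos hcx]
  · rw [hcx, sub_self, abs_zero] at hc
    exact absurd hc (not_lt.2 (abs_nonneg _))
  · have hcy : y < c := by
      rw [abs_of_pos (sub_pos.2 hcx)] at hc
      have := (abs_lt.1 hc).2; linarith
    rw [if_neg (asymm hcy), if_neg (asymm hcx), if_pos hcy, if_pos hcx]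

lemma signExp_natCast (r : ℝ) (k : ℕ) : signExp r (k : Ordinal) = signAt r k := by
  have h : ∃ n : ℕ, (k : Ordinal) = (n : Ordinal) := ⟨k, rfl⟩
  rw [signExp, dif_pos h]
  congr 1
  exact (Nat.cast_injective h.choose_spec).symm

lemma signExp_none (r : ℝ) {γ : Ordinal} (h : ¬ ∃ n : ℕ, γ = (n : Ordinal)) :
    signExp r γ = none := dif_neg h


open Filter Topology in
/-- If a sequence of reals converges classically to a real `x` that is not a
dyadic rational, then the s-limit of the sign expansions is exactly the sign expansion of `x`. -/
theorem slim_signExp_of_tendsto_of_not_dyadic (r : ℕ → ℝ) (x : ℝ)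
    (hconv : Tendsto r atTop (𝓝 x)) (hx : ¬ IsDyadic x) :
    slim (fun n => signExp (r n)) = signExp x := by
  funext γ
  by_cases hγ : ∃ n : ℕ, γ = (n : Ordinal)
  · obtain ⟨m, rfl⟩ := hγ
    have hpos : ∀ k : ℕ, 0 < |cand (signState x k) - x| := fun k =>
      abs_pos.2 (sub_ne_zero.2 (cand_ne x hx k))
    have hFne : (Finset.range (m + 1)).Nonempty := ⟨0, Finset.mem_range.2 (Nat.succ_pos m)⟩
    set ε := (Finset.range (m + 1)).inf' hFne (fun k => |cand (signState x k) - x|) with hεdef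
    have hεpos : 0 < ε := (Finset.lt_inf'_iff _).2 fun k _ => hpos k
    have hεle : ∀ k ≤ m, ε ≤ |cand (signState x k) - x| := fun k hk =>
      Finset.inf'_le _ (Finset.mem_range.2 (Nat.lt_succ_of_le hk))
    obtain ⟨N, hN⟩ := Metric.tendsto_atTop.1 hconv ε hεpos
    have hsign : ∀ n, N ≤ n → ∀ k ≤ m, signAt (r n) k = signAt x k := fun n hn k hk =>
      signAt_close x (r n) k fun j hj =>
        lt_of_lt_of_le (by simpa [Real.dist_eq] using hN n hn) (hεle j (hj.trans hk))
    have hcond : ∃ l0 : ℕ, ∀ m' ≤ (m : Ordinal), ∀ l, l0 ≤ l → ∀ l', l0 ≤ l' →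
        signExp (r l) m' = signExp (r l') m' ∧ (signExp (r l) m').isSome := by
      refine ⟨N, fun m' hm' l hl l' hl' => ?_⟩
      obtain ⟨k, rfl⟩ := Ordinal.lt_omega0.1 (lt_of_le_of_lt hm' (Ordinal.nat_lt_omega0 m))
      have hk : k ≤ m := by exact_mod_cast hm'
      rw [signExp_natCast, signExp_natCast, hsign l hl k hk, hsign l' hl' k hk]
      exact ⟨rfl, signAt_isSome x hx k⟩
    rw [signExp_natCast]
    simp only [slim]
    rw [dif_pos hcond]
    have hspec := (hcond.choose_spec (m : Ordinal) le_rfl hcond.choose le_rfl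
      (max hcond.choose N) (le_max_left _ _)).1
    rw [hspec, signExp_natCast, hsign _ (le_max_right _ _) m le_rfl]
  · rw [signExp_none x hγ]
    simp only [slim]
    rw [dif_neg]
    rintro ⟨l0, H⟩
    have h2 := (H γ le_rfl l0 le_rfl l0 le_rfl).2
    rw [signExp_none (r l0) hγ] at h2
    simp at h2
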